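/- Let q = p^h with p an odd prime, and let G be a subgroup of SL(2,q) of order q² - 1. Then for every A ∈ G, also -A ∈ G; hence G is a disjoint union of (q²-1)/2 antipodal pairs {A, -A}. -/

import Mathlib

lemma two_ne_zero_char (p h : ℕ) (hp : p.Prime) (hodd : Odd p) (hh : 1 ≤ h)
    (F : Type*) [Field F] [Fintype F] (hcard : Fintype.card F = p ^ h) :
    (2 : F) ≠ 0 := by
  obtain ⟨p', hchar⟩ := CharP.exists F
  haveI := hchar
  haveI hfact : Fact p'.Prime := ⟨CharP.char_is_prime F p'⟩
  obtain ⟨n, hn⟩ := FiniteField.card F p'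
  have hdvd : p' ∣ p ^ h := by
    rw [← hcard, hn.2]
    exact dvd_pow_self p' n.pos.ne'
  have hpp : p' = p :=
    (Nat.prime_dvd_prime_iff_eq hfact.out hp).mp (hfact.out.dvd_of_dvd_pow hdvd)
  subst hpp
  intro h2
  have hd2 : p' ∣ 2 := (CharP.cast_eq_zero_iff F p' 2).mp (by exact_mod_cast h2)
  have : p' = 2 := (Nat.prime_dvd_prime_iff_eq hp Nat.prime_two).mp hd2
  rw [this] at hodd
  exact (Nat.not_odd_iff_even.mpr (even_two)) hodd
open Matrix

lemma invol_eq_neg_one {F : Type*} [Field F] (h2 : (2:F) ≠ 0)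
    (x : Matrix.SpecialLinearGroup (Fin 2) F) (hx : x * x = 1) (hx1 : x ≠ 1) :
    x = -1 := by
  have hM : x.val * x.val = 1 := by
    have := congrArg Subtype.val hx
    simpa using this
  set a := x.val 0 0 with ha
  set b := x.val 0 1 with hb
  set c := x.val 1 0 with hc
  set d := x.val 1 1 with hd
  have hdet : a * d - b * c = 1 := by
    have := x.property
    rwa [Matrix.det_fin_two] at this
  have h00 : a * a + b * c = 1 := by
    have := congrFun (congrFun hM 0) 0
    simpa [Matrix.mul_apply, Fin.sum_univ_two, ← ha, ← hb, ← hc, ← hd] using this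
  have h01 : a * b + b * d = 0 := by
    have := congrFun (congrFun hM 0) 1
    simpa [Matrix.mul_apply, Fin.sum_univ_two, ← ha, ← hb, ← hc, ← hd] using this
  have h10 : c * a + d * c = 0 := by
    have := congrFun (congrFun hM 1) 0
    simpa [Matrix.mul_apply, Fin.sum_univ_two, ← ha, ← hb, ← hc, ← hd] using this
  by_cases htr : a + d = 0
  · exfalso
    have hda : d = -a := by linear_combination htr
    apply h2
    linear_combination -h00 - hdet + a * htr
  · have hb0 : b = 0 := by
      have : b * (a + d) = 0 := by linear_combination h01
      rcases mul_eq_zero.mp this with h | h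
      · exact h
      · exact absurd h htr
    have hc0 : c = 0 := by
      have : c * (a + d) = 0 := by linear_combination h10
      rcases mul_eq_zero.mp this with h | h
      · exact h
      · exact absurd h htr
    have had : a * d = 1 := by linear_combination hdet + c * hb0
    have haa : a * a = 1 := by linear_combination h00 - c * hb0
    have hda : d = a := by linear_combination a * had - d * haa
    rcases mul_self_eq_one_iff.mp haa with h1 | hm1
    · exact absurd (Subtype.ext (by
        ext i j
        fin_cases i <;> fin_cases j <;>
          simp [← ha, ← hb, ← hc, ← hd, hb0, hc0, hda, h1])) hx1
    · apply Subtype.ext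
      ext i j
      fin_cases i <;> fin_cases j <;>
        simp [← ha, ← hb, ← hc, ← hd, hb0, hc0, hda, hm1]

instance : Fact (Even (Fintype.card (Fin 2))) := ⟨by decide⟩

/-- a subgroup G of SL(2,q) of order q²-1 is closed under negation,
hence is a disjoint union of (q²-1)/2 antipodal pairs {A, -A}. -/
theorem stmt8 (p h : ℕ) (hp : p.Prime) (hodd : Odd p) (hh : 1 ≤ h)
    (F : Type*) [Field F] [Fintype F] (hcard : Fintype.card F = p ^ h)
    (G : Subgroup (Matrix.SpecialLinearGroup (Fin 2) F))
    (hG : Nat.card G = Fintype.card F ^ 2 - 1) :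
    (∀ A ∈ G, -A ∈ G) ∧ (∀ A ∈ G, A ≠ -A) := by
  have h2 : (2 : F) ≠ 0 := two_ne_zero_char p h hp hodd hh F hcard
  -- G has even order
  haveI : Fintype G := Fintype.ofFinite G
  have hq : Odd (Fintype.card F) := by rw [hcard]; exact hodd.pow
  have heven : Even (Fintype.card F ^ 2 - 1) := Nat.Odd.sub_odd hq.pow odd_one
  have hdvd : 2 ∣ Fintype.card G := by
    rw [Fintype.card_eq_nat_card, hG]
    exact heven.two_dvd
  haveI : Fact (Nat.Prime 2) := ⟨Nat.prime_two⟩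
  obtain ⟨g, hg⟩ := exists_prime_orderOf_dvd_card 2 hdvd
  have hg2 : (g : Matrix.SpecialLinearGroup (Fin 2) F) * g = 1 := by
    have : g ^ 2 = 1 := by
      have h' := pow_orderOf_eq_one g
      rwa [hg] at h'
    have := congrArg (Subgroup.subtype G) this
    simpa [sq] using this
  have hg1 : (g : Matrix.SpecialLinearGroup (Fin 2) F) ≠ 1 := by
    intro hone
    have : g = 1 := Subtype.ext hone
    rw [this, orderOf_one] at hg
    norm_num at hg
  have hneg : (g : Matrix.SpecialLinearGroup (Fin 2) F) = -1 :=
    invol_eq_neg_one h2 _ hg2 hg1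
  constructor
  · intro A hA
    have : -A = (g : Matrix.SpecialLinearGroup (Fin 2) F) * A := by
      rw [hneg, neg_one_mul]
    rw [this]
    exact G.mul_mem g.2 hA
  · intro A _ hAA
    have hval : A.val = -A.val := by
      have := congrArg Subtype.val hAA
      rwa [Matrix.SpecialLinearGroup.coe_neg] at this
    have hzero : A.val = 0 := by
      have h2A : (2 : F) • A.val = 0 := by
        rw [two_smul]
        nth_rewrite 1 [hval]
        exact neg_add_cancel _
      rcases smul_eq_zero.mp h2A with h | h
      · exact absurd h h2
      · exact h
    have : Matrix.det A.val = 1 := A.2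
    rw [hzero] at this
    simp [Matrix.det_fin_two] at this
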